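/- Let S be a finite semigroup in which every right stabilizer is a band (i.e., whenever q·w = q in the right regular representation the stabilizing element is idempotent). More precisely, assume: for every q ∈ S¹ and s ∈ S, q·s = q implies s² = s. Then for any q ∈ S¹ and x, y ∈ S¹ with xy ∈ S and q·(xy) = q, the elements xy and yx are J-equivalent idempotents; in particular they have the same position in any chain of regular J-classes. -/
import Mathlib


/-- Green's J-preorder in a monoid: `a ≤_J b` iff `a ∈ M b M`. -/
def jLeM {M : Type*} [Monoid M] (a b : M) : Prop := ∃ u v : M, a = u * b * v

theorem stmt3 {S : Type*} [Semigroup S] [Fintype S]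
    (hstab : ∀ (q : WithOne S) (s : S), q * (s : WithOne S) = q → s * s = s)
    (q x y : WithOne S) (z : S) (hz : x * y = (z : WithOne S))
    (hq : q * (z : WithOne S) = q) :
    ∃ w : S, y * x = (w : WithOne S) ∧ z * z = z ∧ w * w = w ∧
      jLeM (z : WithOne S) (w : WithOne S) ∧ jLeM (w : WithOne S) (z : WithOne S) := by
  obtain ⟨w, hw⟩ : ∃ w : S, y * x = (w : WithOne S) := by
    rcases eq_or_ne x 1 with hx | hx
    · subst hx
      rw [one_mul] at hz
      exact ⟨z, by rw [mul_one, hz]⟩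
    · rcases eq_or_ne y 1 with hy | hy
      · subst hy
        rw [mul_one] at hz
        exact ⟨z, by rw [one_mul, hz]⟩
      · obtain ⟨a, ha⟩ := WithOne.ne_one_iff_exists.mp hx
        obtain ⟨b, hb⟩ := WithOne.ne_one_iff_exists.mp hy
        exact ⟨b * a, by rw [← ha, ← hb, WithOne.coe_mul]⟩
  have hz2 : z * z = z := hstab q z hq
  have key : (q * x) * (w : WithOne S) = q * x := by
    rw [← hw]
    calc q * x * (y * x) = q * (x * y) * x := by simp [mul_assoc]
      _ = q * (z : WithOne S) * x := by rw [hz]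
      _ = q * x := by rw [hq]
  have hw2 : w * w = w := hstab (q * x) w key
  refine ⟨w, hw, hz2, hw2, ⟨x, y, ?_⟩, ⟨y, x, ?_⟩⟩
  · calc (z : WithOne S) = (z : WithOne S) * z := by rw [← WithOne.coe_mul, hz2]
      _ = (x * y) * (x * y) := by rw [hz]
      _ = x * (y * x) * y := by simp [mul_assoc]
      _ = x * (w : WithOne S) * y := by rw [hw]
  · calc (w : WithOne S) = (w : WithOne S) * w := by rw [← WithOne.coe_mul, hw2]
      _ = (y * x) * (y * x) := by rw [hw]
      _ = y * (x * y) * x := by simp [mul_assoc]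
      _ = y * (z : WithOne S) * x := by rw [hz]
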